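/- arXiv:1611.02465 — 2 statements merged into one kernel-verified Lean document; each statement's English description precedes it below -/
import Mathlib

section
/- Let N be a natural number, β : Fin N → ℝ with β ℓ > 0 for all ℓ, and equip V := Fin N → ℝ³ with the mass-lumped inner product ⟨φ, ψ⟩_h := ∑ ℓ, β ℓ * (φ ℓ ⬝ ψ ℓ). Let g : V → V → ℝ be a symmetric bilinear form and D : V → V a map satisfying ⟨D φ, ψ⟩_h = −g φ ψ for all φ, ψ ∈ V. Let C_ex > 0, α > 0, k > 0, and m, m', P ∈ V. Write mid := (m + m')/2 and dt := (m' − m)/k, and suppose the midpoint scheme holds: for all φ ∈ V, ⟨dt, φ⟩_h = −C_ex * ∑ ℓ, β ℓ * ((mid ℓ ×ᵥ (D mid) ℓ) ⬝ φ ℓ) − ∑ ℓ, β ℓ * ((mid ℓ ×ᵥ P ℓ) ⬝ φ ℓ) + α * ∑ ℓ, β ℓ * ((mid ℓ ×ᵥ dt ℓ) ⬝ φ ℓ). Then the discrete energy identity holds: (C_ex/(2k)) * (g m' m' − g m m) + α * ‖dt‖_h² = ⟨dt, P⟩_h. -/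
open scoped InnerProductSpace BigOperators

noncomputable section

/-- ℝ³ with the Euclidean norm and inner product. -/
abbrev R3 := EuclideanSpace ℝ (Fin 3)

/-- The cross product on ℝ³. -/
def cross3 (a b : R3) : R3 := WithLp.toLp 2 (crossProduct a b)

/-- Mass-lumped inner product `⟨φ, ψ⟩_h := ∑ ℓ, β ℓ * (φ ℓ ⬝ ψ ℓ)`. -/
def innh {N : ℕ} (β : Fin N → ℝ) (φ ψ : Fin N → R3) : ℝ :=
  ∑ ℓ, β ℓ * ⟪φ ℓ, ψ ℓ⟫_ℝ

/-- Mass-lumped norm `‖φ‖_h := √⟨φ, φ⟩_h`. -/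
def normh {N : ℕ} (β : Fin N → ℝ) (φ : Fin N → R3) : ℝ :=
  Real.sqrt (innh β φ φ)

lemma cross3_inner_anticomm (a b c : R3) : ⟪cross3 a b, c⟫_ℝ = -⟪cross3 a c, b⟫_ℝ := by
  simp [cross3, crossProduct, PiLp.inner_apply, Fin.sum_univ_three]; ring

lemma cross3_inner_self (a b : R3) : ⟪cross3 a b, b⟫_ℝ = 0 := by
  simp [cross3, crossProduct, PiLp.inner_apply, Fin.sum_univ_three]; ring

/-- discrete energy identity for one step of the implicit-explicit
midpoint scheme (Lemma 3.3(a)). -/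
theorem stmt3 {N : ℕ} (β : Fin N → ℝ) (hβ : ∀ ℓ, 0 < β ℓ)
    (g : (Fin N → R3) →ₗ[ℝ] (Fin N → R3) →ₗ[ℝ] ℝ)
    (hg : ∀ u v : Fin N → R3, g u v = g v u)
    (D : (Fin N → R3) → (Fin N → R3))
    (hD : ∀ φ ψ : Fin N → R3, innh β (D φ) ψ = - g φ ψ)
    (Cex α k : ℝ) (hCex : 0 < Cex) (hα : 0 < α) (hk : 0 < k)
    (m m' P : Fin N → R3)
    (hscheme : ∀ φ : Fin N → R3,
      innh β (k⁻¹ • (m' - m)) φ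
        = -Cex * (∑ ℓ, β ℓ *
              ⟪cross3 (((2:ℝ)⁻¹ • (m + m')) ℓ) (D ((2:ℝ)⁻¹ • (m + m')) ℓ), φ ℓ⟫_ℝ)
          - (∑ ℓ, β ℓ * ⟪cross3 (((2:ℝ)⁻¹ • (m + m')) ℓ) (P ℓ), φ ℓ⟫_ℝ)
          + α * (∑ ℓ, β ℓ *
              ⟪cross3 (((2:ℝ)⁻¹ • (m + m')) ℓ) ((k⁻¹ • (m' - m)) ℓ), φ ℓ⟫_ℝ)) :
    Cex / (2 * k) * (g m' m' - g m m) + α * (normh β (k⁻¹ • (m' - m))) ^ 2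
      = innh β (k⁻¹ • (m' - m)) P := by
  set dt : Fin N → R3 := k⁻¹ • (m' - m) with hdt
  set mid : Fin N → R3 := (2:ℝ)⁻¹ • (m + m') with hmid
  set F : Fin N → R3 := Cex • D mid + P with hF
  -- (1) testing the scheme with dt
  have e1 : innh β dt dt = ∑ ℓ, β ℓ * ⟪cross3 (mid ℓ) (dt ℓ), F ℓ⟫_ℝ := by
    rw [hscheme dt, neg_mul, Finset.mul_sum, Finset.mul_sum, ← Finset.sum_neg_distrib,
      ← Finset.sum_sub_distrib, ← Finset.sum_add_distrib]
    refine Finset.sum_congr rfl fun ℓ _ => ?_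
    have hFl : F ℓ = Cex • D mid ℓ + P ℓ := rfl
    rw [hFl, inner_add_right, real_inner_smul_right, cross3_inner_self,
      cross3_inner_anticomm (mid ℓ) (dt ℓ) (D mid ℓ),
      cross3_inner_anticomm (mid ℓ) (dt ℓ) (P ℓ)]
    ring
  -- (2) testing the scheme with F
  have e2 : innh β dt F = α * ∑ ℓ, β ℓ * ⟪cross3 (mid ℓ) (dt ℓ), F ℓ⟫_ℝ := by
    rw [hscheme F]
    have h0 : -Cex * (∑ ℓ, β ℓ * ⟪cross3 (mid ℓ) (D mid ℓ), F ℓ⟫_ℝ)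
        - ∑ ℓ, β ℓ * ⟪cross3 (mid ℓ) (P ℓ), F ℓ⟫_ℝ = 0 := by
      rw [neg_mul, Finset.mul_sum, ← Finset.sum_neg_distrib, ← Finset.sum_sub_distrib]
      refine Finset.sum_eq_zero fun ℓ _ => ?_
      have hFl : F ℓ = Cex • D mid ℓ + P ℓ := rfl
      rw [hFl, inner_add_right, real_inner_smul_right, cross3_inner_self,
        inner_add_right, real_inner_smul_right, cross3_inner_self,
        cross3_inner_anticomm (mid ℓ) (D mid ℓ) (P ℓ)]
      ring
    linear_combination h0
  -- split innh β dt F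
  have e3 : innh β dt F = Cex * innh β dt (D mid) + innh β dt P := by
    simp only [innh, hF, Pi.add_apply, Pi.smul_apply, inner_add_right,
      real_inner_smul_right, Finset.mul_sum, ← Finset.sum_add_distrib]
    exact Finset.sum_congr rfl fun ℓ _ => by ring
  -- relation to g
  have e4 : innh β dt (D mid) = - g mid dt := by
    rw [← hD]
    exact Finset.sum_congr rfl fun ℓ _ => by rw [real_inner_comm]
  have e5 : g mid dt = (g m' m' - g m m) / (2 * k) := by
    rw [hmid, hdt]
    simp only [map_smul, map_add, map_sub, LinearMap.smul_apply, LinearMap.add_apply,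
      LinearMap.sub_apply, smul_eq_mul]
    rw [hg m m']
    field_simp
    ring
  -- norm
  have e6 : (normh β dt) ^ 2 = innh β dt dt := by
    rw [normh, Real.sq_sqrt]
    exact Finset.sum_nonneg fun ℓ _ =>
      mul_nonneg (hβ ℓ).le real_inner_self_nonneg
  rw [← e1] at e2
  have e7 : innh β dt P = Cex * g mid dt + α * innh β dt dt := by
    linear_combination e2 - e3 - Cex * e4
  rw [e6]
  linear_combination (-1:ℝ) * e7 - Cex * e5

end
end

section
/- Let N be a natural number, β : Fin N → ℝ with β ℓ > 0 for all ℓ, and equip V := Fin N → ℝ³ with the mass-lumped inner product ⟨φ, ψ⟩_h := ∑ ℓ, β ℓ * (φ ℓ ⬝ ψ ℓ). Let k > 0, α > 0, h, m ∈ V, and suppose η ∈ V satisfies, for every φ ∈ V, (2/k) * ⟨η, φ⟩_h + ∑ ℓ, β ℓ * ((η ℓ ×ᵥ h ℓ) ⬝ φ ℓ) + (α/(2k)) * ∑ ℓ, β ℓ * ((η ℓ ×ᵥ m ℓ) ⬝ φ ℓ) = (2/k) * ⟨m, φ⟩_h. Then the updated magnetization m' := 2 • η − m satisfies ‖m' ℓ‖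 = ‖m ℓ‖ for every node ℓ. -/
open scoped InnerProductSpace BigOperators

noncomputable section

lemma inner_cross3_left (a b : R3) : ⟪cross3 a b, a⟫_ℝ = 0 := by
  have : ⟪cross3 a b, a⟫_ℝ = dotProduct (a : Fin 3 → ℝ) (crossProduct a b) := by
    simp [cross3, PiLp.inner_apply, dotProduct, mul_comm]
  rw [this, dot_self_cross]

/-- the update `m' := 2 • η − m` of the midpoint scheme with inexact
solver conserves the modulus of the magnetization at every node (Remark 5.2(ii)). -/
theorem stmt6 {N : ℕ} (β : Fin N → ℝ) (hβ : ∀ ℓ, 0 < β ℓ)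
    (k α : ℝ) (hk : 0 < k) (hα : 0 < α) (h m η : Fin N → R3)
    (hη : ∀ φ : Fin N → R3,
      (2 / k) * innh β η φ
        + (∑ ℓ, β ℓ * ⟪cross3 (η ℓ) (h ℓ), φ ℓ⟫_ℝ)
        + (α / (2 * k)) * (∑ ℓ, β ℓ * ⟪cross3 (η ℓ) (m ℓ), φ ℓ⟫_ℝ)
        = (2 / k) * innh β m φ) :
    ∀ ℓ : Fin N, ‖((2:ℝ) • η - m) ℓ‖ = ‖m ℓ‖ := by
  intro ℓ
  -- test with the nodal function supported at ℓ with value η ℓ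
  set φ : Fin N → R3 := fun j => if j = ℓ then η ℓ else 0 with hφ
  have key := hη φ
  have hcollapse : ∀ (g : Fin N → R3),
      (∑ j, β j * ⟪g j, φ j⟫_ℝ) = β ℓ * ⟪g ℓ, η ℓ⟫_ℝ := by
    intro g
    rw [Finset.sum_eq_single ℓ]
    · simp [hφ]
    · intro j _ hj; simp [hφ, hj]
    · intro hmem; exact absurd (Finset.mem_univ ℓ) hmem
  rw [innh, innh, hcollapse, hcollapse, hcollapse, hcollapse,
    inner_cross3_left] at key
  have hcm : ⟪cross3 (η ℓ) (m ℓ), η ℓ⟫_ℝ = 0 := inner_cross3_left _ _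
  rw [hcm] at key
  have hkne : (2 / k) ≠ 0 := by positivity
  have hβne : β ℓ ≠ 0 := (hβ ℓ).ne'
  have hinner : ⟪η ℓ, η ℓ⟫_ℝ = ⟪m ℓ, η ℓ⟫_ℝ := by
    have hc : (2 / k * β ℓ) ≠ 0 := by positivity
    refine mul_left_cancel₀ hc ?_
    ring_nf
    ring_nf at key
    linarith
  -- conclude equality of norms via squared norms
  have hx : ((2:ℝ) • η - m) ℓ = (2:ℝ) • η ℓ - m ℓ := rfl
  rw [hx]
  have hsq : ⟪(2:ℝ) • η ℓ - m ℓ, (2:ℝ) • η ℓ - m ℓ⟫_ℝ = ⟪m ℓ, m ℓ⟫_ℝ := by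
    simp only [inner_sub_sub_self, real_inner_smul_left, real_inner_smul_right]
    have hsymm : ⟪η ℓ, m ℓ⟫_ℝ = ⟪m ℓ, η ℓ⟫_ℝ := real_inner_comm _ _
    nlinarith [hinner, hsymm]
  have := congrArg Real.sqrt hsq
  rwa [real_inner_self_eq_norm_sq, real_inner_self_eq_norm_sq,
    Real.sqrt_sq (norm_nonneg _), Real.sqrt_sq (norm_nonneg _)] at this

end
end
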